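/- arXiv:1508.04050 — 2 statements merged into one kernel-verified Lean document; each statement's English description precedes it below -/
import Mathlib

section
/- For all m, n ≥ 1, in the cactus group J_{m+n} one has (s_{1,m+n} · s_{1,m} · s_{m+1,m+n}) · (s_{1,m+n} · s_{1,n} · s_{n+1,m+n}) = e, where s_{p,p} denotes the identity element. (This says that the commutor σ_{m,n} = s_{1,m+n}s_{1,m}s_{m+1,m+n} of the free coboundary category satisfies σ_{n,m}∘σ_{m,n} = id.) -/
/-- Generators `s_{p,q}`, `1 ≤ p < q ≤ n`, of the `n`-fruit cactus group. -/
def CactusGen (n : ℕ) : Type :=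
  { pq : ℕ × ℕ // 1 ≤ pq.1 ∧ pq.1 < pq.2 ∧ pq.2 ≤ n }

/-- The defining relations of the `n`-fruit cactus group, as elements of the free group:
(i) `s_{p,q}² = e`; (ii) `s_{p,q}s_{k,l} = s_{k,l}s_{p,q}` for disjoint intervals;
(iii) `s_{p,q}s_{k,l} = s_{p+q-l,p+q-k}s_{p,q}` for `p ≤ k < l ≤ q`. -/
def cactusRels (n : ℕ) : Set (FreeGroup (CactusGen n)) :=
  { x |
    (∃ (p q : ℕ) (h : 1 ≤ p ∧ p < q ∧ q ≤ n),
      x = FreeGroup.of (⟨(p, q), h⟩ : CactusGen n) * FreeGroup.of ⟨(p, q), h⟩) ∨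
    (∃ (p q k l : ℕ) (h : 1 ≤ p ∧ p < q ∧ q ≤ n) (h' : 1 ≤ k ∧ k < l ∧ l ≤ n),
      (q < k ∨ l < p) ∧
      x = FreeGroup.of (⟨(p, q), h⟩ : CactusGen n) * FreeGroup.of ⟨(k, l), h'⟩ *
        (FreeGroup.of (⟨(k, l), h'⟩ : CactusGen n) * FreeGroup.of ⟨(p, q), h⟩)⁻¹) ∨
    (∃ (p q k l : ℕ) (h : 1 ≤ p ∧ p < q ∧ q ≤ n) (h' : 1 ≤ k ∧ k < l ∧ l ≤ n)
        (h'' : 1 ≤ p + q - l ∧ p + q - l < p + q - k ∧ p + q - k ≤ n),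
      (p ≤ k ∧ l ≤ q) ∧
      x = FreeGroup.of (⟨(p, q), h⟩ : CactusGen n) * FreeGroup.of ⟨(k, l), h'⟩ *
        (FreeGroup.of (⟨(p + q - l, p + q - k), h''⟩ : CactusGen n) *
          FreeGroup.of ⟨(p, q), h⟩)⁻¹) }

/-- The `n`-fruit cactus group `J_n`, as a presented group. -/
def CactusGroup (n : ℕ) : Type :=
  PresentedGroup (cactusRels n)

instance (n : ℕ) : Group (CactusGroup n) :=
  inferInstanceAs (Group (PresentedGroup (cactusRels n)))

/-- The generator `s_{p,q}` of the cactus group `J_n`. -/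
def s {n : ℕ} (p q : ℕ) (h : 1 ≤ p ∧ p < q ∧ q ≤ n) : CactusGroup n :=
  PresentedGroup.of ⟨(p, q), h⟩

/-- The generator `s_{p,q}` of `J_n` extended by the convention that `s_{p,p}` denotes the
identity element. -/
def sE {n : ℕ} (p q : ℕ) (h : 1 ≤ p ∧ p ≤ q ∧ q ≤ n) : CactusGroup n :=
  if hlt : p < q then s p q ⟨h.1, hlt, h.2.2⟩ else 1

/-- Transport of cactus group elements along an equality. -/
def Jcast {a b : ℕ} (h : a = b) (x : CactusGroup a) : CactusGroup b := h ▸ x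

/-- `partialSum k i = ∑_{j < i} k j`. -/
def partialSum {n : ℕ} (k : Fin n → ℕ) (i : Fin n) : ℕ :=
  ∑ j ∈ Finset.Iio i, k j

theorem partialSum_add_le {n : ℕ} (k : Fin n → ℕ) (i : Fin n) :
    partialSum k i + k i ≤ ∑ j, k j := by
  have h1 : partialSum k i + k i = ∑ j ∈ Finset.Iic i, k j := by
    rw [partialSum, add_comm, ← Finset.sum_insert (by simp), Finset.Iio_insert]
  rw [h1]
  exact Finset.sum_le_sum_of_subset (Finset.subset_univ _)

lemma rel_eq_one {n : ℕ} (x : FreeGroup (CactusGen n)) (hx : x ∈ cactusRels n) :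
    PresentedGroup.mk (cactusRels n) x = 1 :=
  (QuotientGroup.eq_one_iff x).mpr (Subgroup.subset_normalClosure hx)

lemma s_mul_self {n : ℕ} (p q : ℕ) (h : 1 ≤ p ∧ p < q ∧ q ≤ n) :
    (s p q h : CactusGroup n) * s p q h = 1 := by
  have := rel_eq_one (n := n) (FreeGroup.of ⟨(p, q), h⟩ * FreeGroup.of ⟨(p, q), h⟩) (Or.inl ⟨p, q, h, rfl⟩)
  simp only [map_mul] at this
  exact this

lemma s_braid {n : ℕ} (p q k l : ℕ) (h : 1 ≤ p ∧ p < q ∧ q ≤ n) (h' : 1 ≤ k ∧ k < l ∧ l ≤ n)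
    (h'' : 1 ≤ p + q - l ∧ p + q - l < p + q - k ∧ p + q - k ≤ n)
    (hpk : p ≤ k) (hlq : l ≤ q) :
    (s p q h : CactusGroup n) * s k l h' = s (p+q-l) (p+q-k) h'' * s p q h := by
  have := rel_eq_one (n := n) _ (Or.inr (Or.inr ⟨p, q, k, l, h, h', h'', ⟨hpk, hlq⟩, rfl⟩))
  replace this : (s p q h : CactusGroup n) * s k l h' * (s (p+q-l) (p+q-k) h'' * s p q h)⁻¹ = 1 := this
  have := mul_inv_eq_one.mp this
  simpa [s, PresentedGroup.of] using this

lemma sE_mul_self {n : ℕ} (p q : ℕ) (h : 1 ≤ p ∧ p ≤ q ∧ q ≤ n) :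
    (sE p q h : CactusGroup n) * sE p q h = 1 := by
  unfold sE
  split
  · exact s_mul_self _ _ _
  · simp

lemma sE_braid {nn : ℕ} (p q k l : ℕ) (h : 1 ≤ p ∧ p ≤ q ∧ q ≤ nn)
    (h' : 1 ≤ k ∧ k ≤ l ∧ l ≤ nn)
    (h'' : 1 ≤ p + q - l ∧ p + q - l ≤ p + q - k ∧ p + q - k ≤ nn)
    (hpk : p ≤ k) (hlq : l ≤ q) :
    (sE p q h : CactusGroup nn) * sE k l h' = sE (p+q-l) (p+q-k) h'' * sE p q h := by
  unfold sE
  by_cases hkl : k < l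
  · have hpq : p < q := by omega
    rw [dif_pos hkl, dif_pos hpq, dif_pos (by omega)]
    exact s_braid p q k l _ _ _ hpk hlq
  · have hkl' : k = l := le_antisymm h'.2.1 (not_lt.mp hkl)
    subst hkl'
    rw [dif_neg hkl, dif_neg (lt_irrefl _), mul_one, one_mul]

lemma sE_braid' {nn : ℕ} (p q k l a b : ℕ) (h : 1 ≤ p ∧ p ≤ q ∧ q ≤ nn)
    (h' : 1 ≤ k ∧ k ≤ l ∧ l ≤ nn)
    (ha : a = p + q - l) (hb : b = p + q - k)
    (hab : 1 ≤ a ∧ a ≤ b ∧ b ≤ nn)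
    (hpk : p ≤ k) (hlq : l ≤ q) :
    (sE p q h : CactusGroup nn) * sE k l h' = sE a b hab * sE p q h := by
  subst ha hb
  exact sE_braid p q k l h h' hab hpk hlq

/-- The commutor `σ_{m,n} = s_{1,m+n} s_{1,m} s_{m+1,m+n}` of the free coboundary category
satisfies `σ_{n,m} ∘ σ_{m,n} = id`: in `J_{m+n}`,
`(s_{1,m+n} s_{1,m} s_{m+1,m+n}) (s_{1,m+n} s_{1,n} s_{n+1,m+n}) = e`
(with the convention `s_{p,p} = e`). -/
theorem commutor_symmetry (m n : ℕ) (hm : 1 ≤ m) (hn : 1 ≤ n) :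
    (sE 1 (m + n) (by omega) * sE 1 m (by omega) * sE (m + 1) (m + n) (by omega) :
        CactusGroup (m + n)) *
      (sE 1 (m + n) (by omega) * sE 1 n (by omega) * sE (n + 1) (m + n) (by omega)) = 1 := by
  have h2 : (sE 1 (m+n) (by omega) : CactusGroup (m+n)) * sE 1 n (by omega)
      = sE (m+1) (m+n) (by omega) * sE 1 (m+n) (by omega) :=
    sE_braid' 1 (m+n) 1 n (m+1) (m+n) (by omega) (by omega) (by omega) (by omega)
      (by omega) le_rfl (by omega)
  have h3 : (sE 1 m (by omega) : CactusGroup (m+n)) * sE 1 (m+n) (by omega)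
      = sE 1 (m+n) (by omega) * sE (n+1) (m+n) (by omega) :=
    (sE_braid' 1 (m+n) (n+1) (m+n) 1 m (by omega) (by omega) (by omega) (by omega)
      (by omega) (by omega) le_rfl).symm
  have htt := sE_mul_self (n := m+n) 1 (m+n) (by omega)
  have hCC := sE_mul_self (n := m+n) 1 n (by omega)
  have hDD := sE_mul_self (n := m+n) (n+1) (m+n) (by omega)
  have h2x : ∀ x : CactusGroup (m+n), sE (m+1) (m+n) (by omega) *
      (sE 1 (m+n) (by omega) * x) = sE 1 (m+n) (by omega) * (sE 1 n (by omega) * x) :=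
    fun x => by rw [← mul_assoc, ← h2, mul_assoc]
  have h3x : ∀ x : CactusGroup (m+n), sE 1 m (by omega) *
      (sE 1 (m+n) (by omega) * x) = sE 1 (m+n) (by omega) * (sE (n+1) (m+n) (by omega) * x) :=
    fun x => by rw [← mul_assoc, h3, mul_assoc]
  have hCx : ∀ x : CactusGroup (m+n), sE 1 n (by omega) * (sE 1 n (by omega) * x) = x :=
    fun x => by rw [← mul_assoc, hCC, one_mul]
  simp only [mul_assoc]
  rw [h2x, hCx, h3x, hDD, mul_one]
  exact htt
end

section
/- There exists a family of functions δ_{n;k} : J_n → J_{∑k}, indexed by n ≥ 1 and k : Fin n → ℕ with each k_i ≥ 1, such that: (a) for every generator s_{p,q} of J_n, δ_{n;k}(s_{p,q}) = s_{K_{p−1}+1, K_q} · ∏_{i=p}^{q} s_{K_{i−1}+1, K_i}, where K_i = k_1 + ⋯ + k_i and s_{a,a} denotes the identity element (the factors of the product pairwise commute); and (b) the twisted multiplicativity δ_{n;k}(g) · δ_{n;j}(h) = δ_{n;j}(g·h) holds for all g, h ∈ J_n whenever k_i = j_{π_n(h)⁻¹(i)} for all i (with δ_{n;k}(g) regarded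 in J_{∑j} via ∑k = ∑j). -/
/-- The interval reversal `ŝ_{p,q} ∈ Σ_n` (1-indexed letters): it fixes `i` for `i < p` or
`i > q` and sends `i` to `p + q - i` for `p ≤ i ≤ q`.  Here `Fin n` is regarded as the set
of letters `{1, …, n}` via `i ↦ i + 1`. -/
def sHat (n p q : ℕ) : Equiv.Perm (Fin n) :=
  Function.Involutive.toPerm
    (fun i => if h : 1 ≤ p ∧ p ≤ i.1 + 1 ∧ i.1 + 1 ≤ q ∧ q ≤ n then
        ⟨p + q - (i.1 + 1) - 1, by omega⟩ else i)
    (by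
      intro i
      dsimp only
      by_cases h : 1 ≤ p ∧ p ≤ i.1 + 1 ∧ i.1 + 1 ≤ q ∧ q ≤ n
      · rw [dif_pos h, dif_pos (by dsimp only; omega)]
        exact Fin.ext (by dsimp only; omega)
      · rw [dif_neg h, dif_neg h])

/-- `Kfun k t = k 1 + ⋯ + k t` (`K_0 = 0`), for `k : Fin n → ℕ` and `t ≤ n`. -/
def Kfun {n : ℕ} (k : Fin n → ℕ) (t : ℕ) : ℕ :=
  ∑ j ∈ Finset.univ.filter (fun j : Fin n => (j : ℕ) < t), k j

theorem Kfun_le_sum {n : ℕ} (k : Fin n → ℕ) (t : ℕ) : Kfun k t ≤ ∑ j, k j :=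
  Finset.sum_le_sum_of_subset (Finset.filter_subset _ _)

theorem Kfun_succ {n : ℕ} (k : Fin n → ℕ) (i : ℕ) (hi : i < n) :
    Kfun k (i + 1) = Kfun k i + k ⟨i, hi⟩ := by
  unfold Kfun
  rw [show (Finset.univ.filter fun j : Fin n => (j : ℕ) < i + 1) =
      insert ⟨i, hi⟩ (Finset.univ.filter fun j : Fin n => (j : ℕ) < i) from ?_]
  · rw [Finset.sum_insert (by simp)]
    ring
  · ext j
    simp [Fin.ext_iff]
    omega

theorem Kfun_mono {n : ℕ} (k : Fin n → ℕ) {a b : ℕ} (hab : a ≤ b) :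
    Kfun k a ≤ Kfun k b :=
  Finset.sum_le_sum_of_subset (fun x hx => by
    simp only [Finset.mem_filter] at hx ⊢
    exact ⟨hx.1, by omega⟩)

theorem Kfun_lt {n : ℕ} (k : Fin n → ℕ) (hk : ∀ i, 1 ≤ k i) {a b : ℕ}
    (hab : a < b) (hb : b ≤ n) : Kfun k a + 1 ≤ Kfun k b := by
  have h1 : Kfun k (a + 1) = Kfun k a + k ⟨a, by omega⟩ := Kfun_succ k a (by omega)
  have h2 : Kfun k (a + 1) ≤ Kfun k b := Kfun_mono k (by omega)
  have := hk (⟨a, by omega⟩ : Fin n)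
  omega

-- Part 1: Jcast and relation lemmas
theorem Jcast_rfl {a : ℕ} (h : a = a) (x : CactusGroup a) : Jcast h x = x := rfl

theorem Jcast_mul {a b : ℕ} (h : a = b) (x y : CactusGroup a) :
    Jcast h (x * y) = Jcast h x * Jcast h y := by subst h; rfl

theorem Jcast_trans {a b c : ℕ} (h1 : a = b) (h2 : b = c) (x : CactusGroup a) :
    Jcast h2 (Jcast h1 x) = Jcast (h1.trans h2) x := by subst h1; subst h2; rfl

theorem Jcast_one {a b : ℕ} (h : a = b) : Jcast h (1 : CactusGroup a) = 1 := by subst h; rfl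

theorem Jcast_inv {a b : ℕ} (h : a = b) (x : CactusGroup a) :
    Jcast h x⁻¹ = (Jcast h x)⁻¹ := by subst h; rfl

theorem Jcast_s {a b : ℕ} (h : a = b) (p q : ℕ) (hpq : 1 ≤ p ∧ p < q ∧ q ≤ a) :
    Jcast h (s p q hpq) = s p q ⟨hpq.1, hpq.2.1, h ▸ hpq.2.2⟩ := by subst h; rfl

theorem Jcast_sE {a b : ℕ} (h : a = b) (p q : ℕ) (hpq : 1 ≤ p ∧ p ≤ q ∧ q ≤ a) :
    Jcast h (sE p q hpq) = sE p q ⟨hpq.1, hpq.2.1, h ▸ hpq.2.2⟩ := by subst h; rfl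

theorem rel_one {n : ℕ} {r : FreeGroup (CactusGen n)} (hr : r ∈ cactusRels n) :
    (QuotientGroup.mk r : CactusGroup n) = 1 := by
  rw [QuotientGroup.eq_one_iff]
  exact Subgroup.subset_normalClosure hr

theorem mk_of {n : ℕ} (x : CactusGen n) :
    (QuotientGroup.mk (FreeGroup.of x) : CactusGroup n) = PresentedGroup.of x := rfl

theorem s_sq {n : ℕ} (p q : ℕ) (h : 1 ≤ p ∧ p < q ∧ q ≤ n) : s p q h * s p q h = 1 := by
  have := rel_one (n := n) (r := FreeGroup.of (⟨(p, q), h⟩ : CactusGen n) *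
    FreeGroup.of ⟨(p, q), h⟩) (Or.inl ⟨p, q, h, rfl⟩)
  exact this

theorem s_comm {n : ℕ} (p q k l : ℕ) (h : 1 ≤ p ∧ p < q ∧ q ≤ n)
    (h' : 1 ≤ k ∧ k < l ∧ l ≤ n) (hd : q < k ∨ l < p) :
    s p q h * s k l h' = s k l h' * s p q h := by
  have := rel_one (n := n) (Or.inr (Or.inl ⟨p, q, k, l, h, h', hd, rfl⟩))
  rw [← mul_inv_eq_one]
  exact this

theorem s_nest {n : ℕ} (p q k l : ℕ) (h : 1 ≤ p ∧ p < q ∧ q ≤ n)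
    (h' : 1 ≤ k ∧ k < l ∧ l ≤ n) (h'' : 1 ≤ p + q - l ∧ p + q - l < p + q - k ∧ p + q - k ≤ n)
    (hd : p ≤ k ∧ l ≤ q) :
    s p q h * s k l h' = s (p + q - l) (p + q - k) h'' * s p q h := by
  have := rel_one (n := n) (Or.inr (Or.inr ⟨p, q, k, l, h, h', h'', hd, rfl⟩))
  rw [← mul_inv_eq_one]
  exact this

-- Part 2: sE-level lemmas
theorem sE_sq {n : ℕ} (p q : ℕ) (h : 1 ≤ p ∧ p ≤ q ∧ q ≤ n) : sE p q h * sE p q h = 1 := by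
  unfold sE
  by_cases hlt : p < q
  · rw [dif_pos hlt]; exact s_sq p q _
  · rw [dif_neg hlt, mul_one]

theorem sE_inv {n : ℕ} (p q : ℕ) (h : 1 ≤ p ∧ p ≤ q ∧ q ≤ n) : (sE p q h)⁻¹ = sE p q h := by
  rw [inv_eq_iff_mul_eq_one, sE_sq]

theorem sE_comm {n : ℕ} (p q k l : ℕ) (h : 1 ≤ p ∧ p ≤ q ∧ q ≤ n)
    (h' : 1 ≤ k ∧ k ≤ l ∧ l ≤ n) (hd : q < k ∨ l < p) :
    sE p q h * sE k l h' = sE k l h' * sE p q h := by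
  unfold sE
  by_cases h1 : p < q
  · by_cases h2 : k < l
    · rw [dif_pos h1, dif_pos h2]; exact s_comm p q k l _ _ hd
    · rw [dif_neg h2, mul_one, one_mul]
  · rw [dif_neg h1, mul_one, one_mul]

theorem sE_commute {n : ℕ} (p q k l : ℕ) (h : 1 ≤ p ∧ p ≤ q ∧ q ≤ n)
    (h' : 1 ≤ k ∧ k ≤ l ∧ l ≤ n) (hd : q < k ∨ l < p) :
    Commute (sE p q h) (sE k l h') := sE_comm p q k l h h' hd

theorem sE_nest {n : ℕ} (p q k l : ℕ) (h : 1 ≤ p ∧ p ≤ q ∧ q ≤ n)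
    (h' : 1 ≤ k ∧ k ≤ l ∧ l ≤ n) (h'' : 1 ≤ p + q - l ∧ p + q - l ≤ p + q - k ∧ p + q - k ≤ n)
    (hd : p ≤ k ∧ l ≤ q) :
    sE p q h * sE k l h' = sE (p + q - l) (p + q - k) h'' * sE p q h := by
  by_cases h2 : k < l
  · have h1 : p < q := by omega
    unfold sE
    rw [dif_pos h1, dif_pos h2, dif_pos (by omega)]
    exact s_nest p q k l _ _ _ hd
  · have e1 : sE k l h' = 1 := by rw [sE, dif_neg h2]
    have e2 : sE (p + q - l) (p + q - k) h'' = 1 := by rw [sE, dif_neg (by omega)]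
    rw [e1, e2, mul_one, one_mul]

-- Part 3: Kfun extras, sE congr, TT
theorem Kfun_zero {n : ℕ} (k : Fin n → ℕ) : Kfun k 0 = 0 := by
  unfold Kfun
  rw [Finset.filter_false_of_mem (by intro x _; omega), Finset.sum_empty]

theorem Kfun_congr {n : ℕ} (k : Fin n → ℕ) {t t' : ℕ} (h : ∀ i : Fin n, (i : ℕ) < t ↔ (i : ℕ) < t') :
    Kfun k t = Kfun k t' := by
  unfold Kfun
  exact Finset.sum_congr (Finset.filter_congr fun x _ => by simp [h x]) fun _ _ => rfl

theorem sE_congr {n : ℕ} {p q p' q' : ℕ} (hp : p = p') (hq : q = q')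
    (h : 1 ≤ p ∧ p ≤ q ∧ q ≤ n) (h' : 1 ≤ p' ∧ p' ≤ q' ∧ q' ≤ n) :
    sE p q h = sE p' q' h' := by subst hp; subst hq; rfl

/-- Block-interval generator: `s_{K_a+1, K_b}` when `a < b ≤ n`, else `1`. -/
def TT {n N : ℕ} (j : Fin n → ℕ) (hj : ∀ i, 1 ≤ j i) (hN : ∑ i, j i = N) (a b : ℕ) :
    CactusGroup N :=
  if hab : a < b ∧ b ≤ n then
    sE (Kfun j a + 1) (Kfun j b)
      ⟨Nat.le_add_left 1 _, Kfun_lt j hj hab.1 hab.2, hN ▸ Kfun_le_sum j b⟩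
  else 1

theorem TT_eq_sE {n N : ℕ} (j : Fin n → ℕ) (hj : ∀ i, 1 ≤ j i) (hN : ∑ i, j i = N)
    {a b : ℕ} (hab : a < b) (hb : b ≤ n) (hsE : 1 ≤ Kfun j a + 1 ∧ Kfun j a + 1 ≤ Kfun j b ∧ Kfun j b ≤ N) :
    TT j hj hN a b = sE (Kfun j a + 1) (Kfun j b) hsE := by
  rw [TT, dif_pos ⟨hab, hb⟩]

theorem Jcast_TT {n N N' : ℕ} (j : Fin n → ℕ) (hj : ∀ i, 1 ≤ j i) (hN : ∑ i, j i = N)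
    (h : N = N') (a b : ℕ) :
    Jcast h (TT j hj hN a b) = TT j hj (hN.trans h) a b := by subst h; rfl

theorem TT_congr_j {n N : ℕ} {j j' : Fin n → ℕ} {hj hj' hN hN'} {a b : ℕ}
    (ha : Kfun j a = Kfun j' a) (hb : Kfun j b = Kfun j' b) :
    TT (N := N) j hj hN a b = TT j' hj' hN' a b := by
  unfold TT
  by_cases hab : a < b ∧ b ≤ n
  · rw [dif_pos hab, dif_pos hab]
    exact sE_congr (by omega) hb _ _
  · rw [dif_neg hab, dif_neg hab]

theorem TT_sq {n N : ℕ} (j : Fin n → ℕ) (hj : ∀ i, 1 ≤ j i) (hN : ∑ i, j i = N) (a b : ℕ) :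
    TT j hj hN a b * TT j hj hN a b = 1 := by
  unfold TT
  by_cases hab : a < b ∧ b ≤ n
  · rw [dif_pos hab]; exact sE_sq _ _ _
  · rw [dif_neg hab, mul_one]

theorem TT_inv {n N : ℕ} (j : Fin n → ℕ) (hj : ∀ i, 1 ≤ j i) (hN : ∑ i, j i = N) (a b : ℕ) :
    (TT j hj hN a b)⁻¹ = TT j hj hN a b := by
  rw [inv_eq_iff_mul_eq_one, TT_sq]

theorem TT_commute {n N : ℕ} (j : Fin n → ℕ) (hj : ∀ i, 1 ≤ j i) (hN : ∑ i, j i = N)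
    {a b c d : ℕ} (hd : b ≤ c ∨ d ≤ a) :
    Commute (TT j hj hN a b) (TT j hj hN c d) := by
  unfold TT
  by_cases h1 : a < b ∧ b ≤ n
  · by_cases h2 : c < d ∧ d ≤ n
    · rw [dif_pos h1, dif_pos h2]
      refine sE_commute _ _ _ _ _ _ ?_
      rcases hd with hd | hd
      · exact Or.inl (by have := Kfun_mono j hd; omega)
      · exact Or.inr (by have := Kfun_mono j hd; omega)
    · rw [dif_neg h2]; exact Commute.one_right _
  · rw [dif_neg h1]; exact Commute.one_left _

theorem TT_nest {n N : ℕ} (j : Fin n → ℕ) (hj : ∀ i, 1 ≤ j i) (hN : ∑ i, j i = N)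
    {a b a' b' : ℕ} (ha : a' ≤ a) (hab : a < b) (hb : b ≤ b') (hb' : b' ≤ n)
    (hsE : 1 ≤ Kfun j a' + Kfun j b' - Kfun j b + 1 ∧
      Kfun j a' + Kfun j b' - Kfun j b + 1 ≤ Kfun j a' + Kfun j b' - Kfun j a ∧
      Kfun j a' + Kfun j b' - Kfun j a ≤ N) :
    TT j hj hN a' b' * TT j hj hN a b =
      sE (Kfun j a' + Kfun j b' - Kfun j b + 1) (Kfun j a' + Kfun j b' - Kfun j a) hsE *
        TT j hj hN a' b' := by
  have m1 := Kfun_mono j ha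
  have m2 := Kfun_mono j (le_of_lt hab)
  have m3 := Kfun_mono j hb
  have m4 : Kfun j a + 1 ≤ Kfun j b := Kfun_lt j hj hab (by omega)
  rw [TT, dif_pos ⟨by omega, hb'⟩, TT, dif_pos ⟨hab, by omega⟩]
  rw [sE_nest (Kfun j a' + 1) (Kfun j b') (Kfun j a + 1) (Kfun j b) _ _
    ⟨by omega, by omega, by omega⟩ ⟨by omega, by omega⟩]
  congr 1
  exact sE_congr (by omega) (by omega) _ _

-- Part 4: Kfun of reflected multi-index
theorem sHat_apply {n p q : ℕ} (i : Fin n) :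
    sHat n p q i = if h : 1 ≤ p ∧ p ≤ i.1 + 1 ∧ i.1 + 1 ≤ q ∧ q ≤ n then
      (⟨p + q - (i.1 + 1) - 1, by omega⟩ : Fin n) else i := rfl

theorem Kfun_comp_sHat {n : ℕ} (j : Fin n → ℕ) (p q : ℕ) (hp : 1 ≤ p) (hpq : p ≤ q)
    (hq : q ≤ n) (t : ℕ) :
    Kfun (fun i => j (sHat n p q i)) t =
      if p - 1 ≤ t ∧ t ≤ q then Kfun j (p - 1) + Kfun j q - Kfun j (p + q - 1 - t)
      else Kfun j t := by
  induction t with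
  | zero =>
    rw [Kfun_zero]
    split_ifs with hc
    · have e0 : Kfun j (p + q - 1 - 0) = Kfun j q := congrArg (Kfun j) (by omega)
      have e1 : Kfun j (p - 1) = Kfun j 0 := congrArg (Kfun j) (by omega)
      rw [e0, e1, Kfun_zero]
      omega
    · rw [Kfun_zero]
  | succ t ih =>
    by_cases htn : t < n
    · rw [Kfun_succ _ t htn, Kfun_succ _ t htn, ih]
      by_cases hmid : p ≤ t + 1 ∧ t + 1 ≤ q
      · -- the letter t+1 is moved
        have hval : j (sHat n p q (⟨t, htn⟩ : Fin n)) =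
            j ⟨p + q - 1 - t - 1, by omega⟩ := by
          rw [sHat_apply, dif_pos (show 1 ≤ p ∧ p ≤ t + 1 ∧ t + 1 ≤ q ∧ q ≤ n by omega)]
          exact congrArg j (Fin.ext (show p + q - (t + 1) - 1 = p + q - 1 - t - 1 by omega))
        rw [hval, if_pos (show p - 1 ≤ t + 1 ∧ t + 1 ≤ q by omega)]
        have hsucc : Kfun j (p + q - 1 - t) =
            Kfun j (p + q - 1 - t - 1) + j ⟨p + q - 1 - t - 1, by omega⟩ := by
          conv_lhs => rw [show p + q - 1 - t = (p + q - 1 - t - 1) + 1 by omega]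
          exact Kfun_succ _ _ (by omega)
        have hle1 : Kfun j (p + q - 1 - t) ≤ Kfun j q := Kfun_mono j (by omega)
        have e2 : Kfun j (p + q - 1 - (t + 1)) = Kfun j (p + q - 1 - t - 1) :=
          congrArg (Kfun j) (by omega)
        rw [e2]
        by_cases hc : p - 1 ≤ t
        · rw [if_pos (show p - 1 ≤ t ∧ t ≤ q by omega)]
          omega
        · rw [if_neg (show ¬(p - 1 ≤ t ∧ t ≤ q) by omega)]
          have e3 : Kfun j (p + q - 1 - t - 1) = Kfun j q := congrArg (Kfun j) (by omega)
          have h3 : Kfun j (p - 1) = Kfun j t + j ⟨t, htn⟩ := by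
            conv_lhs => rw [show p - 1 = t + 1 by omega]
            exact Kfun_succ _ _ htn
          omega
      · -- letter t+1 not moved
        have hval : j (sHat n p q (⟨t, htn⟩ : Fin n)) = j (⟨t, htn⟩ : Fin n) := by
          rw [sHat_apply, dif_neg (show ¬(1 ≤ p ∧ p ≤ t + 1 ∧ t + 1 ≤ q ∧ q ≤ n) by omega)]
        rw [hval]
        by_cases hc : p - 1 ≤ t ∧ t ≤ q
        · have htq : t = q := by omega
          rw [if_pos hc, if_neg (show ¬(p - 1 ≤ t + 1 ∧ t + 1 ≤ q) by omega)]
          have e4 : Kfun j (p + q - 1 - t) = Kfun j (p - 1) := congrArg (Kfun j) (by omega)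
          have e5 : Kfun j t = Kfun j q := congrArg (Kfun j) (by omega)
          have := Kfun_mono j (show p - 1 ≤ q by omega)
          omega
        · by_cases hc2 : t + 1 = p - 1
          · rw [if_neg hc, if_pos (show p - 1 ≤ t + 1 ∧ t + 1 ≤ q by omega)]
            have e4 : Kfun j (p + q - 1 - (t + 1)) = Kfun j q := congrArg (Kfun j) (by omega)
            have e5 : Kfun j (p - 1) = Kfun j t + j ⟨t, htn⟩ := by
              conv_lhs => rw [show p - 1 = t + 1 by omega]
              exact Kfun_succ _ _ htn
            omega
          · rw [if_neg hc, if_neg (show ¬(p - 1 ≤ t + 1 ∧ t + 1 ≤ q) by omega)]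
    · -- t ≥ n : both Kfun at t+1 equal Kfun at t
      have e1 : ∀ f : Fin n → ℕ, Kfun f (t + 1) = Kfun f t := fun f =>
        Kfun_congr f fun i => by have := i.isLt; omega
      have hqt : q ≤ t := by omega
      rw [e1, e1, ih, if_neg (show ¬(p - 1 ≤ t + 1 ∧ t + 1 ≤ q) by omega)]
      split_ifs with hc
      · have e4 : Kfun j (p + q - 1 - t) = Kfun j (p - 1) := congrArg (Kfun j) (by omega)
        have e5 : Kfun j t = Kfun j q := congrArg (Kfun j) (by omega)
        have := Kfun_mono j (show p - 1 ≤ q by omega)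
        omega
      · rfl

-- Part 5: list helpers
section ListHelpers
variable {G : Type*} [Group G]

theorem list_prod_sq : ∀ (L : List G), (∀ x ∈ L, x * x = 1) →
    (∀ x ∈ L, ∀ y ∈ L, Commute x y) → L.prod * L.prod = 1
  | [], _, _ => by simp
  | a :: t, h1, h2 => by
    have hc : Commute a t.prod :=
      Commute.list_prod_right _ _ fun y hy => h2 a (by simp) y (by simp [hy])
    have ht : t.prod * t.prod = 1 :=
      list_prod_sq t (fun x hx => h1 x (by simp [hx]))
        (fun x hx y hy => h2 x (by simp [hx]) y (by simp [hy]))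
    have ha : a * a = 1 := h1 a (by simp)
    calc (a :: t).prod * (a :: t).prod = a * (t.prod * a) * t.prod := by
          simp [List.prod_cons, mul_assoc]
      _ = a * (a * t.prod) * t.prod := by rw [hc.symm.eq]
      _ = (a * a) * (t.prod * t.prod) := by simp [mul_assoc]
      _ = 1 := by rw [ha, ht, one_mul]

theorem list_swap (g : G) (f f' : ℕ → G) : ∀ (L : List ℕ), (∀ x ∈ L, g * f x = f' x * g) →
    g * (L.map f).prod = (L.map f').prod * g
  | [], _ => by simp
  | a :: t, h => by
    have h1 : g * f a = f' a * g := h a (by simp)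
    have h2 : g * (t.map f).prod = (t.map f').prod * g :=
      list_swap g f f' t fun x hx => h x (by simp [hx])
    calc g * ((a :: t).map f).prod = (g * f a) * (t.map f).prod := by
          simp [List.prod_cons, mul_assoc]
      _ = f' a * (g * (t.map f).prod) := by rw [h1, mul_assoc]
      _ = f' a * ((t.map f').prod * g) := by rw [h2]
      _ = ((a :: t).map f').prod * g := by simp [List.prod_cons, mul_assoc]

theorem list_pairwise_commute (f : ℕ → G) (h : ∀ a b, Commute (f a) (f b)) :
    ∀ (L : List ℕ), (L.map f).Pairwise Commute
  | [] => List.Pairwise.nil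
  | a :: t => by
    rw [List.map_cons]
    exact List.Pairwise.cons (fun y hy => by
      obtain ⟨b, _, rfl⟩ := List.mem_map.1 hy
      exact h a b) (list_pairwise_commute f h t)

theorem map_reverse_prod (f : ℕ → G) (L : List ℕ) (h : ∀ a b, Commute (f a) (f b)) :
    (L.reverse.map f).prod = (L.map f).prod := by
  refine List.Perm.prod_eq' ?_ (list_pairwise_commute f h L.reverse)
  exact (L.reverse_perm).map f

theorem range'_map_const_sub (c u len : ℕ) (h : u + len ≤ c + 1) :
    (List.range' u len).map (fun m => c - m) = (List.range' (c + 1 - (u + len)) len).reverse := by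
  apply List.ext_getElem
  · simp
  · intro i h1 h2
    rw [List.getElem_map, List.getElem_reverse, List.getElem_range', List.getElem_range']
    simp only [List.length_range'] at h1 h2 ⊢
    simp only [List.length_map, List.length_range'] at h1
    omega

end ListHelpers

-- Part 6: BB (product of single-block generators) and lemmas
/-- Product of single-block generators `s_{K_{m-1}+1, K_m}` for `m = p, …, q`. -/
def BB {n N : ℕ} (j : Fin n → ℕ) (hj : ∀ i, 1 ≤ j i) (hN : ∑ i, j i = N) (p q : ℕ) :
    CactusGroup N :=
  ((List.range' p (q + 1 - p)).map (fun m => TT j hj hN (m - 1) m)).prod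

theorem Jcast_BB {n N N' : ℕ} (j : Fin n → ℕ) (hj : ∀ i, 1 ≤ j i) (hN : ∑ i, j i = N)
    (h : N = N') (p q : ℕ) :
    Jcast h (BB j hj hN p q) = BB j hj (hN.trans h) p q := by subst h; rfl

theorem BB_congr_j {n N : ℕ} {j j' : Fin n → ℕ} {hj hj' hN hN'} {p q : ℕ}
    (h : ∀ t, p - 1 ≤ t → t ≤ q → Kfun j t = Kfun j' t) :
    BB (N := N) j hj hN p q = BB j' hj' hN' p q := by
  unfold BB
  congr 1
  refine List.map_congr_left fun m hm => ?_
  rw [List.mem_range'_1] at hm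
  exact TT_congr_j (h (m - 1) (by omega) (by omega)) (h m (by omega) (by omega))

theorem TT_commute_BB {n N : ℕ} (j : Fin n → ℕ) (hj : ∀ i, 1 ≤ j i) (hN : ∑ i, j i = N)
    {c d p q : ℕ} (hd : q ≤ c ∨ d ≤ p - 1) :
    Commute (TT j hj hN c d) (BB j hj hN p q) := by
  refine Commute.list_prod_right _ _ fun y hy => ?_
  obtain ⟨m, hm, rfl⟩ := List.mem_map.1 hy
  rw [List.mem_range'_1] at hm
  refine TT_commute j hj hN ?_
  rcases hd with hd | hd
  · exact Or.inr (by omega)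
  · exact Or.inl (by omega)

theorem BB_commute_BB {n N : ℕ} (j : Fin n → ℕ) (hj : ∀ i, 1 ≤ j i) (hN : ∑ i, j i = N)
    {p q k l : ℕ} (hd : q ≤ k - 1 ∨ l ≤ p - 1) :
    Commute (BB j hj hN p q) (BB j hj hN k l) := by
  refine Commute.list_prod_right _ _ fun y hy => ?_
  obtain ⟨m, hm, rfl⟩ := List.mem_map.1 hy
  rw [List.mem_range'_1] at hm
  refine (TT_commute_BB j hj hN ?_).symm
  rcases hd with hd | hd
  · exact Or.inl (by omega)
  · exact Or.inr (by omega)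

theorem blk_commute {n N : ℕ} (j : Fin n → ℕ) (hj : ∀ i, 1 ≤ j i) (hN : ∑ i, j i = N)
    (a b : ℕ) : Commute (TT j hj hN (a - 1) a) (TT j hj hN (b - 1) b) := by
  rcases Nat.lt_trichotomy a b with h | h | h
  · exact TT_commute j hj hN (Or.inl (by omega))
  · subst h; exact Commute.refl _
  · exact TT_commute j hj hN (Or.inr (by omega))

theorem BB_sq {n N : ℕ} (j : Fin n → ℕ) (hj : ∀ i, 1 ≤ j i) (hN : ∑ i, j i = N) (p q : ℕ) :
    BB j hj hN p q * BB j hj hN p q = 1 := by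
  refine list_prod_sq _ (fun x hx => ?_) (fun x hx y hy => ?_)
  · obtain ⟨m, _, rfl⟩ := List.mem_map.1 hx
    exact TT_sq j hj hN _ _
  · obtain ⟨m, _, rfl⟩ := List.mem_map.1 hx
    obtain ⟨m', _, rfl⟩ := List.mem_map.1 hy
    exact blk_commute j hj hN m m'

theorem BB_split {n N : ℕ} (j : Fin n → ℕ) (hj : ∀ i, 1 ≤ j i) (hN : ∑ i, j i = N)
    {p r q : ℕ} (hpr : p ≤ r + 1) (hrq : r ≤ q) :
    BB j hj hN p q = BB j hj hN p r * BB j hj hN (r + 1) q := by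
  unfold BB
  have h1 : q + 1 - p = (q - r) + (r + 1 - p) := by omega
  have h2 : p + 1 * (r + 1 - p) = r + 1 := by omega
  have hl : List.range' p (q + 1 - p) = List.range' p (r + 1 - p) ++ List.range' (r + 1) (q - r) := by
    rw [show q + 1 - p = (r + 1 - p) + (q - r) by omega, ← List.range'_append, h2]
  rw [hl, List.map_append, List.prod_append, show q + 1 - (r + 1) = q - r from by omega]

-- Part 7: conjugation of blocks by a big generator
theorem TT_conj_blk {n N : ℕ} {p q m : ℕ} (j : Fin n → ℕ) (hj : ∀ i, 1 ≤ j i) (hN : ∑ i, j i = N)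
    (hj' : ∀ i, 1 ≤ (fun i => j (sHat n p q i)) i) (hN' : ∑ i, (fun i => j (sHat n p q i)) i = N) (hp : 1 ≤ p) (hpq : p < q) (hq : q ≤ n) (hm1 : p ≤ m) (hm2 : m ≤ q) :
    TT j hj hN (p - 1) q * TT j hj hN (m - 1) m =
      TT (fun i => j (sHat n p q i)) hj' hN' (p + q - m - 1) (p + q - m) *
        TT j hj hN (p - 1) q := by
  have hKq : Kfun j (p - 1) ≤ Kfun j q := Kfun_mono j (by omega)
  have hKm1 : Kfun j (m - 1) ≤ Kfun j q := Kfun_mono j (by omega)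
  have hKm : Kfun j m ≤ Kfun j q := Kfun_mono j (by omega)
  have hKmm : Kfun j (m - 1) + 1 ≤ Kfun j m := Kfun_lt j hj (by omega) (by omega)
  have hKp : Kfun j (p - 1) ≤ Kfun j (m - 1) := Kfun_mono j (by omega)
  have hKN : Kfun j q ≤ N := hN ▸ Kfun_le_sum j q
  rw [TT_nest j hj hN (show p - 1 ≤ m - 1 by omega) (show m - 1 < m by omega) hm2 hq
    ⟨by omega, by omega, by omega⟩]
  congr 1
  have e1 : Kfun (fun i => j (sHat n p q i)) (p + q - m - 1) =
      Kfun j (p - 1) + Kfun j q - Kfun j m := by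
    rw [Kfun_comp_sHat j p q hp (le_of_lt hpq) hq,
      if_pos (show p - 1 ≤ p + q - m - 1 ∧ p + q - m - 1 ≤ q by omega)]
    have : Kfun j (p + q - 1 - (p + q - m - 1)) = Kfun j m := congrArg (Kfun j) (by omega)
    omega
  have e2 : Kfun (fun i => j (sHat n p q i)) (p + q - m) =
      Kfun j (p - 1) + Kfun j q - Kfun j (m - 1) := by
    rw [Kfun_comp_sHat j p q hp (le_of_lt hpq) hq,
      if_pos (show p - 1 ≤ p + q - m ∧ p + q - m ≤ q by omega)]
    have : Kfun j (p + q - 1 - (p + q - m)) = Kfun j (m - 1) := congrArg (Kfun j) (by omega)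
    omega
  rw [TT_eq_sE _ hj' hN' (show p + q - m - 1 < p + q - m by omega) (by omega)
    ⟨Nat.le_add_left 1 _, by rw [e1, e2]; omega, by rw [e2]; omega⟩]
  exact (sE_congr (by rw [e1]) (by rw [e2]) _ _).symm

theorem TT_conj_BB {n N : ℕ} {p q u v : ℕ} (j : Fin n → ℕ) (hj : ∀ i, 1 ≤ j i) (hN : ∑ i, j i = N)
    (hj' : ∀ i, 1 ≤ (fun i => j (sHat n p q i)) i) (hN' : ∑ i, (fun i => j (sHat n p q i)) i = N) (hp : 1 ≤ p) (hpq : p < q) (hq : q ≤ n)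
    (hu : p ≤ u) (huv : u ≤ v + 1) (hv : v ≤ q) :
    TT j hj hN (p - 1) q * BB j hj hN u v =
      BB (fun i => j (sHat n p q i)) hj' hN' (p + q - v) (p + q - u) *
        TT j hj hN (p - 1) q := by
  unfold BB
  rw [list_swap (TT j hj hN (p - 1) q) _
    (fun m => TT (fun i => j (sHat n p q i)) hj' hN' (p + q - m - 1) (p + q - m)) _
    (fun m hm => by
      rw [List.mem_range'_1] at hm
      exact TT_conj_blk j hj hN hj' hN' hp hpq hq (by omega) (by omega))]
  congr 1
  have hlen : (p + q - u) + 1 - (p + q - v) = v + 1 - u := by omega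
  rw [hlen]
  have h1 : (List.range' u (v + 1 - u)).map (fun m => p + q - m) =
      (List.range' (p + q + 1 - (u + (v + 1 - u))) (v + 1 - u)).reverse :=
    range'_map_const_sub (p + q) u (v + 1 - u) (by omega)
  have h2 : p + q + 1 - (u + (v + 1 - u)) = p + q - v := by omega
  rw [h2] at h1
  have h3 : (List.range' u (v + 1 - u)).map
      (fun m => TT (fun i => j (sHat n p q i)) hj' hN' (p + q - m - 1) (p + q - m)) =
      ((List.range' (p + q - v) (v + 1 - u)).reverse).map
        (fun m => TT (fun i => j (sHat n p q i)) hj' hN' (m - 1) m) := by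
    rw [← h1, List.map_map]
    rfl
  rw [h3, map_reverse_prod _ _ (blk_commute _ hj' hN')]

theorem TT_conj_BB' {n N : ℕ} {p q u v : ℕ} (j : Fin n → ℕ) (hj : ∀ i, 1 ≤ j i) (hN : ∑ i, j i = N)
    (hj' : ∀ i, 1 ≤ (fun i => j (sHat n p q i)) i) (hN' : ∑ i, (fun i => j (sHat n p q i)) i = N) (hp : 1 ≤ p) (hpq : p < q) (hq : q ≤ n)
    (hu : p ≤ u) (huv : u ≤ v + 1) (hv : v ≤ q) :
    TT j hj hN (p - 1) q * BB (fun i => j (sHat n p q i)) hj' hN' (p + q - v) (p + q - u) =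
      BB j hj hN u v * TT j hj hN (p - 1) q := by
  have h1 := TT_conj_BB j hj hN hj' hN' hp hpq hq hu huv hv
  have hT := TT_sq j hj hN (p - 1) q
  set T := TT j hj hN (p - 1) q
  set B := BB j hj hN u v
  set B' := BB (fun i => j (sHat n p q i)) hj' hN' (p + q - v) (p + q - u)
  calc T * B' = T * B' * (T * T) := by rw [hT, mul_one]
    _ = T * (B' * T) * T := by rw [mul_assoc, mul_assoc, mul_assoc]
    _ = T * (T * B) * T := by rw [← h1]
    _ = (T * T) * (B * T) := by rw [mul_assoc, mul_assoc, mul_assoc]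
    _ = B * T := by rw [hT, one_mul]

-- Part 8: general conjugation, out-of-range Kfun, Dg
theorem TT_conj_TT {n N : ℕ} {p q a b : ℕ} (j : Fin n → ℕ) (hj : ∀ i, 1 ≤ j i)
    (hN : ∑ i, j i = N)
    (hj' : ∀ i, 1 ≤ (fun i => j (sHat n p q i)) i) (hN' : ∑ i, (fun i => j (sHat n p q i)) i = N)
    (hp : 1 ≤ p) (hpq : p < q) (hq : q ≤ n) (ha : p - 1 ≤ a) (hab : a < b) (hb : b ≤ q) :
    TT j hj hN (p - 1) q * TT j hj hN a b =
      TT (fun i => j (sHat n p q i)) hj' hN' (p + q - 1 - b) (p + q - 1 - a) *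
        TT j hj hN (p - 1) q := by
  have hKq : Kfun j (p - 1) ≤ Kfun j q := Kfun_mono j (by omega)
  have hKa : Kfun j a ≤ Kfun j q := Kfun_mono j (by omega)
  have hKb : Kfun j b ≤ Kfun j q := Kfun_mono j (by omega)
  have hKab : Kfun j a + 1 ≤ Kfun j b := Kfun_lt j hj (by omega) (by omega)
  have hKp : Kfun j (p - 1) ≤ Kfun j a := Kfun_mono j (by omega)
  have hKN : Kfun j q ≤ N := hN ▸ Kfun_le_sum j q
  rw [TT_nest j hj hN ha hab hb hq ⟨by omega, by omega, by omega⟩]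
  congr 1
  have e1 : Kfun (fun i => j (sHat n p q i)) (p + q - 1 - b) =
      Kfun j (p - 1) + Kfun j q - Kfun j b := by
    rw [Kfun_comp_sHat j p q hp (le_of_lt hpq) hq,
      if_pos (show p - 1 ≤ p + q - 1 - b ∧ p + q - 1 - b ≤ q by omega)]
    have : Kfun j (p + q - 1 - (p + q - 1 - b)) = Kfun j b := congrArg (Kfun j) (by omega)
    omega
  have e2 : Kfun (fun i => j (sHat n p q i)) (p + q - 1 - a) =
      Kfun j (p - 1) + Kfun j q - Kfun j a := by
    rw [Kfun_comp_sHat j p q hp (le_of_lt hpq) hq,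
      if_pos (show p - 1 ≤ p + q - 1 - a ∧ p + q - 1 - a ≤ q by omega)]
    have : Kfun j (p + q - 1 - (p + q - 1 - a)) = Kfun j a := congrArg (Kfun j) (by omega)
    omega
  rw [TT_eq_sE _ hj' hN' (show p + q - 1 - b < p + q - 1 - a by omega) (by omega)
    ⟨Nat.le_add_left 1 _, by rw [e1, e2]; omega, by rw [e2]; omega⟩]
  exact (sE_congr (by rw [e1]) (by rw [e2]) _ _).symm

theorem Kfun_comp_sHat_out {n : ℕ} (j : Fin n → ℕ) (p q : ℕ) (hp : 1 ≤ p) (hpq : p ≤ q)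
    (hq : q ≤ n) (t : ℕ) (ht : t ≤ p - 1 ∨ q ≤ t) :
    Kfun (fun i => j (sHat n p q i)) t = Kfun j t := by
  rw [Kfun_comp_sHat j p q hp hpq hq]
  split_ifs with hc
  · have := Kfun_mono j (show p - 1 ≤ q by omega)
    rcases ht with ht | ht
    · have ht' : t = p - 1 := by omega
      have e1 : Kfun j (p + q - 1 - t) = Kfun j q := congrArg (Kfun j) (by omega)
      have e2 : Kfun j t = Kfun j (p - 1) := congrArg (Kfun j) (by omega)
      omega
    · have ht' : t = q := by omega
      have e1 : Kfun j (p + q - 1 - t) = Kfun j (p - 1) := congrArg (Kfun j) (by omega)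
      have e2 : Kfun j t = Kfun j q := congrArg (Kfun j) (by omega)
      omega
  · rfl

/-- The image of the generator `s_{p,q}` under the cabling map `δ`. -/
def Dg {n N : ℕ} (j : Fin n → ℕ) (hj : ∀ i, 1 ≤ j i) (hN : ∑ i, j i = N) (p q : ℕ) :
    CactusGroup N :=
  TT j hj hN (p - 1) q * BB j hj hN p q

theorem Jcast_Dg {n N N' : ℕ} (j : Fin n → ℕ) (hj : ∀ i, 1 ≤ j i) (hN : ∑ i, j i = N)
    (h : N = N') (p q : ℕ) :
    Jcast h (Dg j hj hN p q) = Dg j hj (hN.trans h) p q := by subst h; rfl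

theorem Dg_congr_j {n N : ℕ} {j j' : Fin n → ℕ} {hj hj' hN hN'} {p q : ℕ} (hpq : p ≤ q + 1)
    (h : ∀ t, p - 1 ≤ t → t ≤ q → Kfun j t = Kfun j' t) :
    Dg (N := N) j hj hN p q = Dg j' hj' hN' p q := by
  unfold Dg
  rw [TT_congr_j (h (p - 1) (by omega) (by omega)) (h q (by omega) (by omega)),
    BB_congr_j h]

-- Part 9: the three cactus relations for Dg
theorem Dg_rel1 {n N : ℕ} {p q : ℕ} (j : Fin n → ℕ) (hj : ∀ i, 1 ≤ j i) (hN : ∑ i, j i = N)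
    (hj' : ∀ i, 1 ≤ (fun i => j (sHat n p q i)) i) (hN' : ∑ i, (fun i => j (sHat n p q i)) i = N)
    (hp : 1 ≤ p) (hpq : p < q) (hq : q ≤ n) :
    Dg (fun i => j (sHat n p q i)) hj' hN' p q * Dg j hj hN p q = 1 := by
  have hT : TT (fun i => j (sHat n p q i)) hj' hN' (p - 1) q = TT j hj hN (p - 1) q :=
    TT_congr_j (Kfun_comp_sHat_out j p q hp hpq.le hq (p - 1) (Or.inl le_rfl))
      (Kfun_comp_sHat_out j p q hp hpq.le hq q (Or.inr le_rfl))
  have h2 := TT_conj_BB' j hj hN hj' hN' hp hpq hq (le_refl p) (by omega) (le_refl q)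
  rw [show p + q - q = p by omega, show p + q - p = q by omega] at h2
  unfold Dg
  rw [hT]
  set T := TT j hj hN (p - 1) q with hTdef
  set B := BB j hj hN p q with hBdef
  set B' := BB (fun i => j (sHat n p q i)) hj' hN' p q with hB'def
  have hTT : T * T = 1 := TT_sq j hj hN (p - 1) q
  have hBB : B * B = 1 := BB_sq j hj hN p q
  calc T * B' * (T * B) = T * B' * T * B := by rw [← mul_assoc]
    _ = B * T * T * B := by rw [h2]
    _ = B * (T * T) * B := by rw [mul_assoc B T T]
    _ = B * B := by rw [hTT, mul_one]
    _ = 1 := hBB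

theorem Dg_rel2 {n N : ℕ} {p q k l : ℕ} (j : Fin n → ℕ) (hj : ∀ i, 1 ≤ j i)
    (hN : ∑ i, j i = N)
    (hj1 : ∀ i, 1 ≤ (fun i => j (sHat n k l i)) i) (hN1 : ∑ i, (fun i => j (sHat n k l i)) i = N)
    (hj2 : ∀ i, 1 ≤ (fun i => j (sHat n p q i)) i) (hN2 : ∑ i, (fun i => j (sHat n p q i)) i = N)
    (hp : 1 ≤ p) (hpq : p < q) (hq : q ≤ n) (hk : 1 ≤ k) (hkl : k < l) (hl : l ≤ n)
    (hd : q < k ∨ l < p) :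
    Dg (fun i => j (sHat n k l i)) hj1 hN1 p q * Dg j hj hN k l =
      Dg (fun i => j (sHat n p q i)) hj2 hN2 k l * Dg j hj hN p q := by
  have e1 : Dg (fun i => j (sHat n k l i)) hj1 hN1 p q = Dg j hj hN p q :=
    Dg_congr_j (by omega) fun t h1 h2 =>
      Kfun_comp_sHat_out j k l hk hkl.le hl t (by omega)
  have e2 : Dg (fun i => j (sHat n p q i)) hj2 hN2 k l = Dg j hj hN k l :=
    Dg_congr_j (by omega) fun t h1 h2 =>
      Kfun_comp_sHat_out j p q hp hpq.le hq t (by omega)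
  rw [e1, e2]
  unfold Dg
  have c1 : Commute (TT j hj hN (p - 1) q) (TT j hj hN (k - 1) l) := by
    refine TT_commute j hj hN ?_
    rcases hd with hd | hd
    · exact Or.inl (by omega)
    · exact Or.inr (by omega)
  have c2 : Commute (TT j hj hN (p - 1) q) (BB j hj hN k l) :=
    TT_commute_BB j hj hN (by omega)
  have c3 : Commute (BB j hj hN p q) (TT j hj hN (k - 1) l) :=
    (TT_commute_BB j hj hN (by omega)).symm
  have c4 : Commute (BB j hj hN p q) (BB j hj hN k l) :=
    BB_commute_BB j hj hN (by omega)
  exact ((c1.mul_right c2).mul_left (c3.mul_right c4)).eq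

theorem Dg_rel3 {n N : ℕ} {p q k l : ℕ} (j : Fin n → ℕ) (hj : ∀ i, 1 ≤ j i)
    (hN : ∑ i, j i = N)
    (hj1 : ∀ i, 1 ≤ (fun i => j (sHat n k l i)) i) (hN1 : ∑ i, (fun i => j (sHat n k l i)) i = N)
    (hj2 : ∀ i, 1 ≤ (fun i => j (sHat n p q i)) i) (hN2 : ∑ i, (fun i => j (sHat n p q i)) i = N)
    (hp : 1 ≤ p) (hpq : p < q) (hq : q ≤ n) (hk : p ≤ k) (hkl : k < l) (hl : l ≤ q) :
    Dg (fun i => j (sHat n k l i)) hj1 hN1 p q * Dg j hj hN k l =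
      Dg (fun i => j (sHat n p q i)) hj2 hN2 (p + q - l) (p + q - k) * Dg j hj hN p q := by
  have hk1 : 1 ≤ k := by omega
  have hln : l ≤ n := by omega
  have hA : TT (fun i => j (sHat n k l i)) hj1 hN1 (p - 1) q = TT j hj hN (p - 1) q :=
    TT_congr_j (Kfun_comp_sHat_out j k l hk1 hkl.le hln (p - 1) (Or.inl (by omega)))
      (Kfun_comp_sHat_out j k l hk1 hkl.le hln q (Or.inr (by omega)))
  have hB : BB (fun i => j (sHat n k l i)) hj1 hN1 p q =
      BB (fun i => j (sHat n k l i)) hj1 hN1 p (k - 1) *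
        (BB (fun i => j (sHat n k l i)) hj1 hN1 k l *
          BB (fun i => j (sHat n k l i)) hj1 hN1 (l + 1) q) := by
    rw [BB_split _ hj1 hN1 (show p ≤ (k - 1) + 1 by omega) (show k - 1 ≤ q by omega),
      show k - 1 + 1 = k from by omega,
      BB_split _ hj1 hN1 (show k ≤ l + 1 by omega) (show l ≤ q by omega)]
  have hC : BB (fun i => j (sHat n k l i)) hj1 hN1 p (k - 1) = BB j hj hN p (k - 1) :=
    BB_congr_j fun t h1 h2 => Kfun_comp_sHat_out j k l hk1 hkl.le hln t (Or.inl (by omega))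
  have hD : BB (fun i => j (sHat n k l i)) hj1 hN1 (l + 1) q = BB j hj hN (l + 1) q :=
    BB_congr_j fun t h1 h2 => Kfun_comp_sHat_out j k l hk1 hkl.le hln t (Or.inr (by omega))
  have hE' := TT_conj_BB j hj hN hj1 hN1 hk1 hkl hln (le_refl k) (by omega) (le_refl l)
  rw [show k + l - l = k by omega, show k + l - k = l by omega] at hE'
  have hF' := TT_conj_TT j hj hN hj2 hN2 hp hpq hq (show p - 1 ≤ k - 1 by omega)
    (show k - 1 < l by omega) hl
  rw [show p + q - 1 - l = p + q - l - 1 by omega,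
    show p + q - 1 - (k - 1) = p + q - k by omega] at hF'
  have hG := TT_conj_BB j hj hN hj2 hN2 hp hpq hq hk (by omega) hl
  have hBpq : BB j hj hN p q = BB j hj hN p (k - 1) * (BB j hj hN k l * BB j hj hN (l + 1) q) := by
    rw [BB_split j hj hN (show p ≤ (k - 1) + 1 by omega) (show k - 1 ≤ q by omega),
      show k - 1 + 1 = k from by omega,
      BB_split j hj hN (show k ≤ l + 1 by omega) (show l ≤ q by omega)]
  unfold Dg
  rw [hA, hB, hC, hD, hBpq]
  set Tpq := TT j hj hN (p - 1) q with hTpqdef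
  set S := TT j hj hN (k - 1) l with hSdef
  set B1 := BB j hj hN p (k - 1) with hB1def
  set Bm := BB j hj hN k l with hBmdef
  set B2 := BB j hj hN (l + 1) q with hB2def
  set Bm' := BB (fun i => j (sHat n k l i)) hj1 hN1 k l with hBm'def
  set T' := TT (fun i => j (sHat n p q i)) hj2 hN2 (p + q - l - 1) (p + q - k) with hT'def
  set B'' := BB (fun i => j (sHat n p q i)) hj2 hN2 (p + q - l) (p + q - k) with hB''def
  -- hE' : S * Bm = Bm' * S ; hF' : Tpq * S = T' * Tpq ; hG : Tpq * Bm = B'' * Tpq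
  have cSB2 : Commute S B2 := TT_commute_BB j hj hN (Or.inr (by omega))
  have cBmB2 : Commute Bm B2 := BB_commute_BB j hj hN (Or.inl (by omega))
  have cB1Bm : Commute B1 Bm := BB_commute_BB j hj hN (Or.inl (by omega))
  have cSB1 : Commute S B1 := TT_commute_BB j hj hN (Or.inl (by omega))
  have hBm2 : Bm * Bm = 1 := BB_sq j hj hN k l
  simp only [mul_assoc]
  conv_lhs =>
    rw [← mul_assoc B2 S Bm, cSB2.symm.eq, mul_assoc S B2 Bm,
      ← mul_assoc Bm' S (B2 * Bm), ← hE', mul_assoc S Bm (B2 * Bm),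
      cBmB2.symm.eq, ← mul_assoc Bm Bm B2, hBm2, one_mul]
  conv_rhs =>
    rw [← mul_assoc B'' Tpq (B1 * (Bm * B2)), ← hG, mul_assoc Tpq Bm (B1 * (Bm * B2)),
      ← mul_assoc T' Tpq (Bm * (B1 * (Bm * B2))), ← hF',
      mul_assoc Tpq S (Bm * (B1 * (Bm * B2))),
      ← mul_assoc Bm B1 (Bm * B2), cB1Bm.symm.eq, mul_assoc B1 Bm (Bm * B2),
      ← mul_assoc Bm Bm B2, hBm2, one_mul,
      ← mul_assoc S B1 B2, cSB1.eq, mul_assoc B1 S B2]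

-- Part 10: permutation identities for sHat
theorem sHat_val {n p q : ℕ} (i : Fin n) :
    (sHat n p q i).1 = if 1 ≤ p ∧ p ≤ i.1 + 1 ∧ i.1 + 1 ≤ q ∧ q ≤ n then
      p + q - (i.1 + 1) - 1 else i.1 := by
  rw [sHat_apply]
  split_ifs with h
  · rfl
  · rfl

theorem sHat_sq {n p q : ℕ} : sHat n p q * sHat n p q = 1 := by
  apply Equiv.ext
  intro i
  apply Fin.ext
  rw [Equiv.Perm.mul_apply, Equiv.Perm.one_apply, sHat_val, sHat_val]
  split_ifs <;> omega

theorem sHat_inv {n p q : ℕ} : (sHat n p q)⁻¹ = sHat n p q :=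
  inv_eq_of_mul_eq_one_left sHat_sq

theorem sHat_comm {n p q k l : ℕ} (hd : q < k ∨ l < p) :
    sHat n p q * sHat n k l = sHat n k l * sHat n p q := by
  apply Equiv.ext
  intro i
  apply Fin.ext
  rw [Equiv.Perm.mul_apply, Equiv.Perm.mul_apply, sHat_val, sHat_val, sHat_val, sHat_val]
  split_ifs <;> omega

theorem sHat_nest {n p q k l : ℕ} (hp : 1 ≤ p) (hq : q ≤ n) (hpk : p ≤ k) (hkl : k < l) (hlq : l ≤ q) :
    sHat n p q * sHat n k l = sHat n (p + q - l) (p + q - k) * sHat n p q := by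
  apply Equiv.ext
  intro i
  apply Fin.ext
  rw [Equiv.Perm.mul_apply, Equiv.Perm.mul_apply, sHat_val, sHat_val, sHat_val, sHat_val]
  split_ifs <;> omega

-- Part 11: the auxiliary group Wc
/-- Positive multi-indices. -/
def PosFun (n : ℕ) := {f : Fin n → ℕ // ∀ i, 1 ≤ f i}

/-- Total size of a multi-index. -/
def Nsum {n : ℕ} (j : PosFun n) : ℕ := ∑ i, j.1 i

theorem Nsum_eq {n : ℕ} (j : PosFun n) : ∑ i, j.1 i = Nsum j := rfl

/-- Precompose a multi-index with a permutation. -/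
def shiftP {n : ℕ} (σ : Equiv.Perm (Fin n)) (j : PosFun n) : PosFun n :=
  ⟨fun i => j.1 (σ i), fun i => j.2 _⟩

theorem Nsum_shiftP {n : ℕ} (σ : Equiv.Perm (Fin n)) (j : PosFun n) :
    Nsum (shiftP σ j) = Nsum j := Equiv.sum_comp σ j.1

theorem shiftP_shiftP {n : ℕ} (σ τ : Equiv.Perm (Fin n)) (j : PosFun n) :
    shiftP σ (shiftP τ j) = shiftP (τ * σ) j := rfl

theorem shiftP_one {n : ℕ} (j : PosFun n) : shiftP 1 j = j := rfl

theorem shiftP_cancel {n : ℕ} (σ : Equiv.Perm (Fin n)) (j : PosFun n) :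
    shiftP σ (shiftP σ⁻¹ j) = j := by
  apply Subtype.ext
  funext i
  show j.1 (σ⁻¹ (σ i)) = j.1 i
  rw [← Equiv.Perm.mul_apply, inv_mul_cancel, Equiv.Perm.one_apply]

theorem dapp_congr {n M : ℕ} (d : ∀ j : PosFun n, CactusGroup (Nsum j)) {j j' : PosFun n}
    (h : j = j') (pf : Nsum j = M) (pf' : Nsum j' = M) :
    Jcast pf (d j) = Jcast pf' (d j') := by subst h; rfl

/-- The auxiliary group receiving the cactus group: a permutation together with a
compatible family of elements of cactus groups indexed by multi-indices. -/
def Wc (n : ℕ) : Type :=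
  Equiv.Perm (Fin n) × (∀ j : PosFun n, CactusGroup (Nsum j))

instance (n : ℕ) : Mul (Wc n) :=
  ⟨fun x y => ⟨x.1 * y.1, fun j =>
    Jcast (Nsum_shiftP y.1⁻¹ j) (x.2 (shiftP y.1⁻¹ j)) * y.2 j⟩⟩

instance (n : ℕ) : One (Wc n) := ⟨⟨1, fun _ => 1⟩⟩

instance (n : ℕ) : Inv (Wc n) :=
  ⟨fun x => ⟨x.1⁻¹, fun j => Jcast (Nsum_shiftP x.1 j) ((x.2 (shiftP x.1 j))⁻¹)⟩⟩

theorem Wc_mul_fst {n : ℕ} (x y : Wc n) : (x * y).1 = x.1 * y.1 := rfl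

theorem Wc_mul_snd {n : ℕ} (x y : Wc n) (j : PosFun n) :
    (x * y).2 j = Jcast (Nsum_shiftP y.1⁻¹ j) (x.2 (shiftP y.1⁻¹ j)) * y.2 j := rfl

instance (n : ℕ) : Group (Wc n) where
  mul_assoc a b c := by
    refine Prod.ext (mul_assoc _ _ _) ?_
    funext j
    show (a * b * c).2 j = (a * (b * c)).2 j
    rw [Wc_mul_snd, Wc_mul_snd, Wc_mul_snd, Wc_mul_snd, Jcast_mul, Jcast_trans, mul_assoc]
    congr 1
  one_mul a := by
    refine Prod.ext (one_mul _) ?_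
    funext j
    show (1 * a).2 j = a.2 j
    rw [Wc_mul_snd]
    show Jcast _ (1 : CactusGroup _) * a.2 j = a.2 j
    rw [Jcast_one, one_mul]
  mul_one a := by
    refine Prod.ext (mul_one _) ?_
    funext j
    show (a * 1).2 j = a.2 j
    rw [Wc_mul_snd]
    show Jcast _ (a.2 (shiftP (1 : Equiv.Perm (Fin n))⁻¹ j)) * 1 = a.2 j
    rw [mul_one]
    have h : shiftP (1 : Equiv.Perm (Fin n))⁻¹ j = j := by rw [inv_one]; rfl
    rw [dapp_congr a.2 h _ rfl, Jcast_rfl]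
  inv_mul_cancel a := by
    refine Prod.ext (inv_mul_cancel _) ?_
    funext j
    show (a⁻¹ * a).2 j = (1 : Wc n).2 j
    rw [Wc_mul_snd]
    show Jcast _ (Jcast _ ((a.2 (shiftP a.1 (shiftP a.1⁻¹ j)))⁻¹)) * a.2 j = 1
    rw [Jcast_trans, Jcast_inv, dapp_congr a.2 (shiftP_cancel a.1 j) _ rfl, Jcast_rfl,
      inv_mul_cancel]

/-- Projection to the permutation component. -/
def Wfst (n : ℕ) : Wc n →* Equiv.Perm (Fin n) where
  toFun := Prod.fst
  map_one' := rfl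
  map_mul' _ _ := rfl

-- Part 12: the homomorphism into Wc and the main theorem
/-- Image of a generator of the cactus group in `Wc`. -/
def Fgen {n : ℕ} (x : CactusGen n) : Wc n :=
  (sHat n x.1.1 x.1.2, fun j => Dg j.1 j.2 rfl x.1.1 x.1.2)

theorem Fgen_rels {n : ℕ} : ∀ r ∈ cactusRels n, FreeGroup.lift (Fgen (n := n)) r = 1 := by
  have key1 : ∀ x y : CactusGen n, FreeGroup.lift Fgen (FreeGroup.of x * FreeGroup.of y) =
      Fgen x * Fgen y := by
    intro x y; simp only [map_mul, FreeGroup.lift_apply_of]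
  have key2 : ∀ x y z w : CactusGen n, FreeGroup.lift Fgen (FreeGroup.of x * FreeGroup.of y *
      (FreeGroup.of z * FreeGroup.of w)⁻¹) = Fgen x * Fgen y * (Fgen z * Fgen w)⁻¹ := by
    intro x y z w; simp only [map_mul, map_inv, FreeGroup.lift_apply_of]
  intro r hr
  rcases hr with ⟨p, q, h, rfl⟩ | ⟨p, q, k, l, h, h', hd, rfl⟩ | ⟨p, q, k, l, h, h', h'', hd, rfl⟩
  · refine (key1 _ _).trans ?_
    refine Prod.ext sHat_sq ?_
    funext j
    show (Fgen ⟨(p, q), h⟩ * Fgen ⟨(p, q), h⟩).2 j = 1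
    rw [Wc_mul_snd]
    have hidx : shiftP (Fgen (⟨(p, q), h⟩ : CactusGen n)).1⁻¹ j =
        shiftP (sHat n p q) j := by
      show shiftP (sHat n p q)⁻¹ j = shiftP (sHat n p q) j
      rw [sHat_inv]
    rw [dapp_congr (Fgen ⟨(p, q), h⟩).2 hidx _ (Nsum_shiftP _ j)]
    show Jcast (Nsum_shiftP (sHat n p q) j) (Dg (fun i => j.1 (sHat n p q i)) (shiftP (sHat n p q) j).2 (Nsum_eq (shiftP (sHat n p q) j)) p q) *
      Dg j.1 j.2 (Nsum_eq j) p q = 1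
    erw [Jcast_Dg]
    exact Dg_rel1 j.1 j.2 rfl _ _ h.1 h.2.1 h.2.2
  · refine (key2 _ _ _ _).trans ?_
    rw [mul_inv_eq_one]
    refine Prod.ext (sHat_comm hd) ?_
    funext j
    rw [Wc_mul_snd, Wc_mul_snd]
    have hidx1 : shiftP (Fgen (⟨(k, l), h'⟩ : CactusGen n)).1⁻¹ j =
        shiftP (sHat n k l) j := by
      show shiftP (sHat n k l)⁻¹ j = shiftP (sHat n k l) j
      rw [sHat_inv]
    have hidx2 : shiftP (Fgen (⟨(p, q), h⟩ : CactusGen n)).1⁻¹ j =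
        shiftP (sHat n p q) j := by
      show shiftP (sHat n p q)⁻¹ j = shiftP (sHat n p q) j
      rw [sHat_inv]
    rw [dapp_congr (Fgen ⟨(p, q), h⟩).2 hidx1 _ (Nsum_shiftP _ j),
      dapp_congr (Fgen ⟨(k, l), h'⟩).2 hidx2 _ (Nsum_shiftP _ j)]
    show Jcast (Nsum_shiftP (sHat n k l) j) (Dg (fun i => j.1 (sHat n k l i)) (shiftP (sHat n k l) j).2 (Nsum_eq (shiftP (sHat n k l) j)) p q) *
        Dg j.1 j.2 (Nsum_eq j) k l =
      Jcast (Nsum_shiftP (sHat n p q) j) (Dg (fun i => j.1 (sHat n p q i)) (shiftP (sHat n p q) j).2 (Nsum_eq (shiftP (sHat n p q) j)) k l) *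
        Dg j.1 j.2 (Nsum_eq j) p q
    erw [Jcast_Dg, Jcast_Dg]
    exact Dg_rel2 j.1 j.2 rfl _ _ _ _ h.1 h.2.1 h.2.2 h'.1 h'.2.1 h'.2.2 hd
  · refine (key2 _ _ _ _).trans ?_
    rw [mul_inv_eq_one]
    refine Prod.ext (sHat_nest h.1 h.2.2 hd.1 h'.2.1 hd.2) ?_
    funext j
    rw [Wc_mul_snd, Wc_mul_snd]
    have hidx1 : shiftP (Fgen (⟨(k, l), h'⟩ : CactusGen n)).1⁻¹ j =
        shiftP (sHat n k l) j := by
      show shiftP (sHat n k l)⁻¹ j = shiftP (sHat n k l) j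
      rw [sHat_inv]
    have hidx2 : shiftP (Fgen (⟨(p, q), h⟩ : CactusGen n)).1⁻¹ j =
        shiftP (sHat n p q) j := by
      show shiftP (sHat n p q)⁻¹ j = shiftP (sHat n p q) j
      rw [sHat_inv]
    rw [dapp_congr (Fgen ⟨(p, q), h⟩).2 hidx1 _ (Nsum_shiftP _ j),
      dapp_congr (Fgen ⟨(p + q - l, p + q - k), h''⟩).2 hidx2 _ (Nsum_shiftP _ j)]
    show Jcast (Nsum_shiftP (sHat n k l) j) (Dg (fun i => j.1 (sHat n k l i)) (shiftP (sHat n k l) j).2 (Nsum_eq (shiftP (sHat n k l) j)) p q) *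
        Dg j.1 j.2 (Nsum_eq j) k l =
      Jcast (Nsum_shiftP (sHat n p q) j) (Dg (fun i => j.1 (sHat n p q i)) (shiftP (sHat n p q) j).2 (Nsum_eq (shiftP (sHat n p q) j))
          (p + q - l) (p + q - k)) *
        Dg j.1 j.2 (Nsum_eq j) p q
    erw [Jcast_Dg, Jcast_Dg]
    exact Dg_rel3 j.1 j.2 rfl _ _ _ _ h.1 h.2.1 h.2.2 hd.1 h'.2.1 hd.2

/-- The lifted homomorphism `J_n → Wc n`. -/
def Phi (n : ℕ) : CactusGroup n →* Wc n := PresentedGroup.toGroup Fgen_rels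

theorem Phi_of {n : ℕ} (x : CactusGen n) : Phi n (PresentedGroup.of x) = Fgen x :=
  PresentedGroup.toGroup.of Fgen_rels

theorem Dg_formula {n N : ℕ} (k : Fin n → ℕ) (hk : ∀ i, 1 ≤ k i) (hN : ∑ i, k i = N)
    {p q : ℕ} (hp : 1 ≤ p) (hpq : p < q) (hq : q ≤ n)
    (hsE : 1 ≤ Kfun k (p - 1) + 1 ∧ Kfun k (p - 1) + 1 ≤ Kfun k q ∧ Kfun k q ≤ N)
    (F : Fin (q - p + 1) → CactusGroup N)
    (hF : ∀ t : Fin (q - p + 1), F t = TT k hk hN (p + t.1 - 1) (p + t.1)) :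
    Dg k hk hN p q =
      sE (Kfun k (p - 1) + 1) (Kfun k q) hsE * ((List.finRange (q - p + 1)).map F).prod := by
  unfold Dg
  congr 1
  · exact TT_eq_sE k hk hN (by omega) hq hsE
  · rw [List.map_congr_left (fun t _ => hF t)]
    unfold BB
    rw [show q + 1 - p = q - p + 1 from by omega, List.range'_eq_map_range, List.map_map,
      ← List.map_coe_finRange_eq_range, List.map_map]
    rfl

/-- There is a family of functions `δ_{n;k} : J_n → J_{∑k}` (for `n ≥ 1` and `k` with all
`k i ≥ 1`) such that (a) on a generator `s_{p,q}` it is given by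
`s_{K_{p-1}+1, K_q} · ∏_{i=p}^{q} s_{K_{i-1}+1, K_i}` and (b) the twisted multiplicativity
`δ_{n;k}(g)·δ_{n;j}(h) = δ_{n;j}(g·h)` holds whenever `k_i = j_{π_n(h)⁻¹(i)}`.
Here `π` is the family of homomorphisms `J_m → Σ_m` determined by `π(s_{p,q}) = ŝ_{p,q}`. -/
theorem exists_cactus_delta
    (π : ∀ m : ℕ, CactusGroup m →* Equiv.Perm (Fin m))
    (hπ : ∀ (m p q : ℕ) (h : 1 ≤ p ∧ p < q ∧ q ≤ m), π m (s p q h) = sHat m p q) :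
    ∃ δ : ∀ (n : ℕ), 1 ≤ n → ∀ (k : Fin n → ℕ), (∀ i, 1 ≤ k i) →
        CactusGroup n → CactusGroup (∑ i, k i),
      (∀ (n : ℕ) (hn : 1 ≤ n) (k : Fin n → ℕ) (hk : ∀ i, 1 ≤ k i)
          (p q : ℕ) (h : 1 ≤ p ∧ p < q ∧ q ≤ n),
        δ n hn k hk (s p q h) =
          sE (Kfun k (p - 1) + 1) (Kfun k q)
              ⟨by omega, Kfun_lt k hk (by omega) (by omega), Kfun_le_sum k q⟩ *
            ((List.finRange (q - p + 1)).map fun t =>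
              sE (Kfun k (p + t.1 - 1) + 1) (Kfun k (p + t.1))
                ⟨by omega, Kfun_lt k hk (by omega) (by have := t.isLt; omega),
                  Kfun_le_sum k _⟩).prod) ∧
      (∀ (n : ℕ) (hn : 1 ≤ n) (kk jj : Fin n → ℕ) (hkk : ∀ i, 1 ≤ kk i)
          (hjj : ∀ i, 1 ≤ jj i) (g h : CactusGroup n)
          (hmatch : ∀ i, kk i = jj ((π n h)⁻¹ i)),
        Jcast ((Finset.sum_congr rfl fun i _ => hmatch i).trans
            (Equiv.sum_comp (π n h)⁻¹ jj)) (δ n hn kk hkk g) * δ n hn jj hjj h =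
          δ n hn jj hjj (g * h)) := by
  refine ⟨fun n hn k hk g => (Phi n g).2 ⟨k, hk⟩, ?_, ?_⟩
  · intro n hn k hk p q h
    show (Phi n (s p q h)).2 ⟨k, hk⟩ = _
    rw [show Phi n (s p q h) = Fgen ⟨(p, q), h⟩ from Phi_of _]
    show Dg k hk (Nsum_eq ⟨k, hk⟩) p q = _
    exact Dg_formula k hk _ h.1 h.2.1 h.2.2 _ _ fun t =>
      (TT_eq_sE k hk _ (by omega) (by have := t.isLt; omega) _).symm
  · intro n hn kk jj hkk hjj g h hmatch
    have hπ1 : (Wfst n).comp (Phi n) = π n := by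
      apply PresentedGroup.ext
      intro x
      obtain ⟨⟨p, q⟩, hx⟩ := x
      exact (congrArg (Wfst n) (Phi_of ⟨(p, q), hx⟩)).trans (hπ n p q hx).symm
    have hfst : (Phi n h).1 = π n h := by rw [← hπ1]; rfl
    beta_reduce
    rw [map_mul]
    erw [Wc_mul_snd]
    congr 1
    refine dapp_congr (Phi n g).2 ?_ _ _
    apply Subtype.ext
    funext i
    show kk i = jj ((Phi n h).1⁻¹ i)
    rw [hfst]
    exact hmatch i
end
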